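/- In the setting of Setup 2.7 (maps α : K → M a morphism of DG algebras from a length-3 Koszul complex to a length-4 Poincaré DG algebra M, and β : M → K[-1] defined by [β_i(θ_i)·φ_{4-i}]_K = (−1)^{i+1}[θ_i · α_{4-i}(φ_{4-i})]_M), the composition β ∘ α = 0. -/
import Mathlib


/-- Proposition 3.1(1): In the setting of Setup 2.7, with
`α : K → M` a DG algebra morphism from the length-3 Koszul complex `K` to the
length-4 Poincaré DG algebra `M`, and `β : M → K[-1]` defined by
`[βᵢ(θ)·φ]_K = (-1)^{i+1} [θ·α_{4-i}(φ)]_M`, one has `β ∘ α = 0`.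

`K₀ = M₀ = R`, `α₀ = id`; the defining property of `β` is expressed degreewise
via the orientations `ωK : K₃ ≃ R`, `ωM : M₄ ≃ R`.  That `K` is a length-3
complex (`K₄ = 0`) and `α` multiplicative is reflected in the hypotheses that
products of `α`-images landing in degree 4 vanish. -/
theorem stmt8
    {R : Type*} [CommRing R]
    {K1 K2 K3 M1 M2 M3 M4 : Type*}
    [AddCommGroup K1] [AddCommGroup K2] [AddCommGroup K3]
    [AddCommGroup M1] [AddCommGroup M2] [AddCommGroup M3] [AddCommGroup M4]
    [Module R K1] [Module R K2] [Module R K3]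
    [Module R M1] [Module R M2] [Module R M3] [Module R M4]
    -- differentials of the Koszul complex K (K₀ = R) and of M (M₀ = R)
    (k1 : K1 →ₗ[R] R) (k2 : K2 →ₗ[R] K1) (k3 : K3 →ₗ[R] K2)
    (m1 : M1 →ₗ[R] R) (m2 : M2 →ₗ[R] M1) (m3 : M3 →ₗ[R] M2) (m4 : M4 →ₗ[R] M3)
    -- graded multiplications on K and on M
    (kmul11 : K1 →ₗ[R] K1 →ₗ[R] K2) (kmul12 : K1 →ₗ[R] K2 →ₗ[R] K3)
    (mmul11 : M1 →ₗ[R] M1 →ₗ[R] M2) (mmul12 : M1 →ₗ[R] M2 →ₗ[R] M3)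
    (mmul13 : M1 →ₗ[R] M3 →ₗ[R] M4) (mmul22 : M2 →ₗ[R] M2 →ₗ[R] M4)
    -- orientations [-]_K and [-]_M
    (ωK : K3 ≃ₗ[R] R) (ωM : M4 ≃ₗ[R] R)
    -- the comparison morphism α : K → M (α₀ = id_R)
    (α1 : K1 →ₗ[R] M1) (α2 : K2 →ₗ[R] M2) (α3 : K3 →ₗ[R] M3)
    -- the duality map β : M → K[-1]
    (β1 : M1 →ₗ[R] R) (β2 : M2 →ₗ[R] K1) (β3 : M3 →ₗ[R] K2) (β4 : M4 →ₗ[R] K3)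
    -- defining property of β in each degree: [βᵢ(θ)·φ]_K = (-1)^{i+1}[θ·α_{4-i}(φ)]_M
    (hβ1 : ∀ (θ : M1) (φ : K3), β1 θ * ωK φ = ωM (mmul13 θ (α3 φ)))
    (hβ2 : ∀ (θ : M2) (φ : K2), ωK (kmul12 (β2 θ) φ) = - ωM (mmul22 θ (α2 φ)))
    (hβ3 : ∀ (θ : M3) (φ : K1), ωK (kmul12 φ (β3 θ)) = - ωM (mmul13 (α1 φ) θ))
    -- α is multiplicative and K₄ = 0, so degree-4 products of α-images vanish
    (hαtop13 : ∀ (φ : K1) (ψ : K3), mmul13 (α1 φ) (α3 ψ) = 0)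
    (hαtop22 : ∀ (φ ψ : K2), mmul22 (α2 φ) (α2 ψ) = 0)
    -- the pairings K₁ ⊗ K₂ → K₃ of the Koszul algebra are perfect (nondegenerate)
    (hKnd1 : ∀ x : K1, (∀ y : K2, kmul12 x y = 0) → x = 0)
    (hKnd2 : ∀ y : K2, (∀ x : K1, kmul12 x y = 0) → y = 0) :
    (∀ φ : K1, β1 (α1 φ) = 0) ∧ (∀ φ : K2, β2 (α2 φ) = 0) ∧
      (∀ φ : K3, β3 (α3 φ) = 0) := by
  refine ⟨?_, ?_, ?_⟩
  · intro φ
    have h := hβ1 (α1 φ) (ωK.symm 1)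
    rw [hαtop13, map_zero, ωK.apply_symm_apply, mul_one] at h
    exact h
  · intro φ
    apply hKnd1
    intro ψ
    have h := hβ2 (α2 φ) ψ
    rw [hαtop22, map_zero, neg_zero] at h
    exact ωK.injective (by simpa using h)
  · intro φ
    apply hKnd2
    intro ψ
    have h := hβ3 (α3 φ) ψ
    rw [hαtop13, map_zero, neg_zero] at h
    exact ωK.injective (by simpa using h)
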